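/- Let λ_{i1} > 0, λ_{i2} ≥ 0, μ_i > 0 for i = 1, 2. If λ₁₁ ≤ λ₂₁, μ₁ ≥ μ₂ and 2(λ₂₁ − λ₁₁) ≥ λ₁₂ − λ₂₂, then r^W_1(t) ≤ r^W_2(t) for all t > 0, i.e. τ^W_1 ≥_hr τ^W_2. -/

import Mathlib

/-- The real hyperbolic cotangent. -/
noncomputable def coth (x : ℝ) : ℝ := Real.cosh x / Real.sinh x

/-- `a_i = sqrt((λ_{i2} + μ_i)² + 4 λ_{i1} μ_i)` for the warm standby system. -/
noncomputable def aW (l1 l2 m : ℝ) : ℝ := Real.sqrt ((l2 + m) ^ 2 + 4 * l1 * m)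

/-- Hazard rate of the lifetime of the Markovian two-unit warm standby system. -/
noncomputable def rW (l1 l2 m t : ℝ) : ℝ :=
  2 * l1 * (l1 + l2) / (2 * l1 + l2 + m + aW l1 l2 m * coth (aW l1 l2 m * t / 2))


section WarmAux
open Real Set

lemma exp_sub_one_pos {x : ℝ} (hx : 0 < x) : 0 < Real.exp x - 1 := by
  have := Real.add_one_le_exp x; linarith

-- g(x) = x/(e^x - 1) is antitone on Ioi 0
lemma g_hasDeriv {x : ℝ} (hx : 0 < x) :
    HasDerivAt (fun x : ℝ => x / (Real.exp x - 1))
      ((1 * (Real.exp x - 1) - x * Real.exp x) / (Real.exp x - 1) ^ 2) x := by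
  exact (hasDerivAt_id x).div (((Real.hasDerivAt_exp x).sub_const 1)) (ne_of_gt (exp_sub_one_pos hx))

lemma g_antitone : AntitoneOn (fun x : ℝ => x / (Real.exp x - 1)) (Ioi 0) := by
  apply antitoneOn_of_deriv_nonpos (convex_Ioi 0)
  · intro x hx
    exact ((g_hasDeriv hx).continuousAt).continuousWithinAt
  · intro x hx
    rw [interior_Ioi] at hx
    exact (g_hasDeriv hx).differentiableAt.differentiableWithinAt
  · intro x hx
    rw [interior_Ioi] at hx
    rw [(g_hasDeriv hx).deriv]
    apply div_nonpos_of_nonpos_of_nonneg _ (sq_nonneg _)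
    have h1 := Real.add_one_le_exp (-x)
    have h2 := Real.exp_pos x
    have h3 : Real.exp (-x) * Real.exp x = 1 := by
      rw [← Real.exp_add]; simp
    nlinarith

-- h(x) = x/(e^x-1) + x/2 is monotone on Ioi 0
lemma h_hasDeriv {x : ℝ} (hx : 0 < x) :
    HasDerivAt (fun x : ℝ => x / (Real.exp x - 1) + x / 2)
      ((1 * (Real.exp x - 1) - x * Real.exp x) / (Real.exp x - 1) ^ 2 + 1 / 2) x :=
  (g_hasDeriv hx).add ((hasDerivAt_id x).div_const 2)

lemma h_monotone : MonotoneOn (fun x : ℝ => x / (Real.exp x - 1) + x / 2) (Ioi 0) := by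
  apply monotoneOn_of_deriv_nonneg (convex_Ioi 0)
  · intro x hx
    exact ((h_hasDeriv hx).continuousAt).continuousWithinAt
  · intro x hx
    rw [interior_Ioi] at hx
    exact (h_hasDeriv hx).differentiableAt.differentiableWithinAt
  · intro x hx
    rw [interior_Ioi] at hx
    rw [(h_hasDeriv hx).deriv]
    have hE := exp_sub_one_pos hx
    have hsinh : x < Real.sinh x := Real.self_lt_sinh_iff.2 hx
    rw [Real.sinh_eq] at hsinh
    have h3 : Real.exp (-x) * Real.exp x = 1 := by rw [← Real.exp_add]; simp
    have h2 := Real.exp_pos x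
    rw [div_add' _ _ _ (ne_of_gt (pow_pos hE 2)), le_div_iff₀ (pow_pos hE 2)]
    nlinarith [Real.exp_pos (-x)]

section alg
variable {l11 l12 l21 l22 m1 m2 : ℝ}

-- (A)
lemma lemA (h11 : 0 < l11) (h22 : 0 ≤ l22) (hlam : l11 ≤ l21)
    (hcond : 2 * (l21 - l11) ≥ l12 - l22) :
    l11 * (l11 + l12) ≤ l21 * (l21 + l22) := by
  nlinarith [sq_nonneg (l21 - l11), mul_nonneg h22 (sub_nonneg.2 hlam),
    mul_nonneg h11.le (by linarith : (0:ℝ) ≤ l22 + 2 * (l21 - l11) - l12)]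

-- (D)
lemma lemD (h11 : 0 < l11) (h12 : 0 ≤ l12) (h21 : 0 < l21) (h22 : 0 ≤ l22)
    (hm1 : 0 < m1) (hm2 : 0 < m2) (hlam : l11 ≤ l21) (hmu : m1 ≥ m2)
    (hcond : 2 * (l21 - l11) ≥ l12 - l22) :
    l11 * (l11 + l12) * (2 * l21 + l22 + m2) ≤ l21 * (l21 + l22) * (2 * l11 + l12 + m1) := by
  have hA := lemA h11 h22 hlam hcond
  have hs : 0 ≤ l22 + 2 * (l21 - l11) - l12 := by linarith
  nlinarith [mul_nonneg (mul_nonneg h11.le hs) (sub_nonneg.2 hlam),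
    mul_nonneg (mul_nonneg h22 hs) (sub_nonneg.2 hlam),
    mul_nonneg (mul_nonneg h11.le h12) (sub_nonneg.2 hlam),
    mul_nonneg hm2.le (sub_nonneg.2 hA),
    mul_nonneg (mul_nonneg h11.le hs) h22,
    mul_nonneg (mul_nonneg h11.le hs) h11.le,
    sq_nonneg (l21 - l11), mul_nonneg h22 (sub_nonneg.2 hlam),
    mul_nonneg (mul_nonneg h11.le (sub_nonneg.2 hlam)) (sub_nonneg.2 hlam),
    mul_nonneg (mul_nonneg h11.le h11.le) (sub_nonneg.2 hmu),
    mul_nonneg (mul_nonneg h11.le h12) (sub_nonneg.2 hmu)]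

end alg

section aw
variable {l1 l2 m : ℝ}

lemma aW_arg_nonneg (h1 : 0 < l1) (hm : 0 < m) : 0 ≤ (l2 + m) ^ 2 + 4 * l1 * m := by
  nlinarith [sq_nonneg (l2 + m)]

lemma aW_sq (h1 : 0 < l1) (hm : 0 < m) : (aW l1 l2 m) ^ 2 = (l2 + m) ^ 2 + 4 * l1 * m :=
  Real.sq_sqrt (aW_arg_nonneg h1 hm)

lemma aW_pos (h1 : 0 < l1) (h2 : 0 ≤ l2) (hm : 0 < m) : 0 < aW l1 l2 m :=
  Real.sqrt_pos.2 (by nlinarith [sq_nonneg (l2 + m)])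

lemma aW_ge (h1 : 0 < l1) (h2 : 0 ≤ l2) (hm : 0 < m) : l2 + m ≤ aW l1 l2 m := by
  have := Real.sqrt_le_sqrt (by nlinarith : (l2 + m) ^ 2 ≤ (l2 + m) ^ 2 + 4 * l1 * m)
  rwa [Real.sqrt_sq (by linarith)] at this

lemma aW_le (h1 : 0 < l1) (h2 : 0 ≤ l2) (hm : 0 < m) :
    aW l1 l2 m ≤ 2 * l1 + l2 + m := by
  have := Real.sqrt_le_sqrt (by nlinarith : (l2 + m) ^ 2 + 4 * l1 * m ≤ (2 * l1 + l2 + m) ^ 2)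
  rwa [Real.sqrt_sq (by linarith)] at this

end aw

-- (B): c1 - a1 ≤ c2 - a2
lemma lemB {l11 l12 l21 l22 m1 m2 : ℝ}
    (h11 : 0 < l11) (h12 : 0 ≤ l12) (h21 : 0 < l21) (h22 : 0 ≤ l22)
    (hm1 : 0 < m1) (hm2 : 0 < m2)
    (hlam : l11 ≤ l21) (hmu : m1 ≥ m2)
    (hcond : 2 * (l21 - l11) ≥ l12 - l22) :
    (2 * l11 + l12 + m1) - aW l11 l12 m1 ≤ (2 * l21 + l22 + m2) - aW l21 l22 m2 := by
  set a1 := aW l11 l12 m1 with ha1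
  set a2 := aW l21 l22 m2 with ha2
  set c1 := 2 * l11 + l12 + m1 with hc1
  set c2 := 2 * l21 + l22 + m2 with hc2
  set d := c1 - a1 with hd
  have ha1sq : a1 ^ 2 = (l12 + m1) ^ 2 + 4 * l11 * m1 := aW_sq h11 hm1
  have ha2sq : a2 ^ 2 = (l22 + m2) ^ 2 + 4 * l21 * m2 := aW_sq h21 hm2
  have hd0 : 0 ≤ d := by have := aW_le h11 h12 hm1; simp only [hd, hc1]; linarith
  have hd2 : d ≤ 2 * l11 := by have := aW_ge h11 h12 hm1; simp only [hd, hc1]; linarith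
  have hcd : 0 < c2 - d := by simp only [hc2]; nlinarith
  have hkey : a2 ^ 2 ≤ (c2 - d) ^ 2 := by
    have hdsq : d ^ 2 = 2 * c1 * d - 4 * (l11 * (l11 + l12)) := by
      simp only [hd, hc1]; nlinarith [ha1sq]
    -- need 2 d (c2 - c1) ≤ 4 (P2 - P1)
    have hA := lemA h11 h22 hlam hcond
    rcases le_or_gt (c2 - c1) 0 with hcc | hcc
    · nlinarith [mul_nonneg hd0 (neg_nonneg.2 hcc)]
    · have h1 : d * (c2 - c1) ≤ 2 * l11 * (c2 - c1) :=
        mul_le_mul_of_nonneg_right hd2 hcc.le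
      have h2 : c2 - c1 ≤ 2 * (l21 - l11) + (l22 - l12) := by
        simp only [hc1, hc2]; linarith
      have h3 : 2 * l11 * (c2 - c1) ≤ 2 * l11 * (2 * (l21 - l11) + (l22 - l12)) := by
        apply mul_le_mul_of_nonneg_left h2 (by linarith)
      nlinarith [sq_nonneg (l21 - l11), mul_nonneg h22 (sub_nonneg.2 hlam)]
  have : a2 ≤ c2 - d := by
    nlinarith [aW_pos h21 h22 hm2, hkey, hcd]
  simp only [hd] at this ⊢; linarith

lemma coth_eq {s : ℝ} (hs : 0 < s) : coth s = 1 + 2 / (Real.exp (2 * s) - 1) := by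
  have hsinh : 0 < Real.sinh s := Real.sinh_pos_iff.2 hs
  have hne : (0:ℝ) < Real.exp s - Real.exp (-s) := by
    rw [Real.sinh_eq] at hsinh; linarith
  have hE : (0:ℝ) < Real.exp (2 * s) - 1 := exp_sub_one_pos (by linarith)
  have he : Real.exp (2 * s) = Real.exp s * Real.exp s := by
    rw [← Real.exp_add]; ring_nf
  have hexp : Real.exp (-s) * Real.exp s = 1 := by rw [← Real.exp_add]; simp
  rw [coth, Real.cosh_eq, Real.sinh_eq]
  rw [div_eq_iff (by linarith : (Real.exp s - Real.exp (-s)) / 2 ≠ 0)]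
  have hes := Real.exp_pos s
  have hE' : Real.exp s * Real.exp s - 1 ≠ 0 := by rw [← he]; exact hE.ne'
  rw [he, Real.exp_neg]
  have hu : (Real.exp s * Real.exp s - 1) * (Real.exp s * Real.exp s - 1)⁻¹ = 1 := mul_inv_cancel₀ hE'
  have hinv : Real.exp s * (Real.exp s)⁻¹ = 1 := mul_inv_cancel₀ hes.ne'
  linear_combination (-(Real.exp s)⁻¹) * hu + ((Real.exp s * Real.exp s - 1)⁻¹ * Real.exp s) * hinv

set_option maxHeartbeats 1600000 in
theorem warm_hr_sufficient (l11 l12 l21 l22 m1 m2 : ℝ)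
    (h11 : 0 < l11) (h12 : 0 ≤ l12) (h21 : 0 < l21) (h22 : 0 ≤ l22)
    (hm1 : 0 < m1) (hm2 : 0 < m2)
    (hlam : l11 ≤ l21) (hmu : m1 ≥ m2)
    (hcond : 2 * (l21 - l11) ≥ l12 - l22) :
    ∀ t > (0 : ℝ), rW l11 l12 m1 t ≤ rW l21 l22 m2 t := by
  intro t ht
  have ht' : t ≠ 0 := ht.ne'
  rw [rW, rW]
  set a1 := aW l11 l12 m1 with ha1def
  set a2 := aW l21 l22 m2 with ha2def
  have ha1 : 0 < a1 := aW_pos h11 h12 hm1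
  have ha2 : 0 < a2 := aW_pos h21 h22 hm2
  set c1 : ℝ := 2 * l11 + l12 + m1 with hc1def
  set c2 : ℝ := 2 * l21 + l22 + m2 with hc2def
  set P1 : ℝ := l11 * (l11 + l12) with hP1def
  set P2 : ℝ := l21 * (l21 + l22) with hP2def
  have hP1 : 0 < P1 := by rw [hP1def]; nlinarith
  have hP2 : 0 < P2 := by rw [hP2def]; nlinarith
  set x1 : ℝ := a1 * t with hx1def
  set x2 : ℝ := a2 * t with hx2def
  have hx1 : 0 < x1 := by rw [hx1def]; exact mul_pos ha1 ht
  have hx2 : 0 < x2 := by rw [hx2def]; exact mul_pos ha2 ht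
  set E1 : ℝ := Real.exp x1 - 1 with hE1def
  set E2 : ℝ := Real.exp x2 - 1 with hE2def
  have hE1 : 0 < E1 := by rw [hE1def]; exact exp_sub_one_pos hx1
  have hE2 : 0 < E2 := by rw [hE2def]; exact exp_sub_one_pos hx2
  have hc1pos : 0 < c1 := by rw [hc1def]; linarith
  have hc2pos : 0 < c2 := by rw [hc2def]; linarith
  clear_value a1 a2 c1 c2 P1 P2 x1 x2 E1 E2
  -- algebraic facts
  have hA : P1 ≤ P2 := by rw [hP1def, hP2def]; exact lemA h11 h22 hlam hcond
  have hDlem : P1 * c2 ≤ P2 * c1 := by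
    rw [hP1def, hP2def, hc1def, hc2def]
    exact lemD h11 h12 h21 h22 hm1 hm2 hlam hmu hcond
  have hBlem : c1 - a1 ≤ c2 - a2 := by
    rw [hc1def, hc2def, ha1def, ha2def]
    exact lemB h11 h12 h21 h22 hm1 hm2 hlam hmu hcond
  have h4P1 : 4 * P1 = (c1 - a1) * (c1 + a1) := by
    have h := aW_sq (l1 := l11) (l2 := l12) (m := m1) h11 hm1
    rw [← ha1def] at h
    rw [hP1def, hc1def]; linear_combination h
  have h4P2 : 4 * P2 = (c2 - a2) * (c2 + a2) := by
    have h := aW_sq (l1 := l21) (l2 := l22) (m := m2) h21 hm2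
    rw [← ha2def] at h
    rw [hP2def, hc2def]; linear_combination h
  -- rewrite the coth terms
  have hco1 : a1 * coth (x1 / 2) = a1 + 2 * a1 / E1 := by
    rw [coth_eq (by linarith : (0:ℝ) < x1 / 2),
      (by ring : 2 * (x1 / 2) = x1), ← hE1def]
    field_simp
  have hco2 : a2 * coth (x2 / 2) = a2 + 2 * a2 / E2 := by
    rw [coth_eq (by linarith : (0:ℝ) < x2 / 2),
      (by ring : 2 * (x2 / 2) = x2), ← hE2def]
    field_simp
  rw [hco1, hco2]
  have hD1 : 0 < c1 + (a1 + 2 * a1 / E1) := by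
    have : 0 < 2 * a1 / E1 := div_pos (by linarith) hE1
    linarith
  have hD2 : 0 < c2 + (a2 + 2 * a2 / E2) := by
    have : 0 < 2 * a2 / E2 := div_pos (by linarith) hE2
    linarith
  rw [div_le_div_iff₀ hD1 hD2,
    show (2:ℝ) * l11 * (l11 + l12) = 2 * P1 by rw [hP1def]; ring,
    show (2:ℝ) * l21 * (l21 + l22) = 2 * P2 by rw [hP2def]; ring]
  have hca1 : 0 < c1 + a1 := by linarith
  have hca2 : 0 < c2 + a2 := by linarith
  have hBB : P1 * (c2 + a2) ≤ P2 * (c1 + a1) := by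
    have hmm := mul_le_mul_of_nonneg_right hBlem (mul_nonneg hca1.le hca2.le)
    have e1 : 4 * P1 * (c2 + a2) = (c1 - a1) * ((c1 + a1) * (c2 + a2)) := by
      linear_combination (c2 + a2) * h4P1
    have e2 : 4 * P2 * (c1 + a1) = (c2 - a2) * ((c1 + a1) * (c2 + a2)) := by
      linear_combination (c1 + a1) * h4P2
    linarith only [hmm, e1, e2]
  have conv1 : 2 * a1 / E1 = 2 * (x1 / E1) / t := by
    rw [hx1def]; field_simp
  have conv2 : 2 * a2 / E2 = 2 * (x2 / E2) / t := by
    rw [hx2def]; field_simp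
  have hg1pos : 0 < x1 / E1 := div_pos hx1 hE1
  have hg2pos : 0 < x2 / E2 := div_pos hx2 hE2
  rcases le_or_gt a1 a2 with hcase | hcase
  · -- a1 ≤ a2 : g decreasing
    have hgm : x2 / E2 ≤ x1 / E1 := by
      have h' := g_antitone (Set.mem_Ioi.2 hx1) (Set.mem_Ioi.2 hx2)
        (by rw [hx1def, hx2def]; exact mul_le_mul_of_nonneg_right hcase ht.le)
      simp only at h'
      rw [hE1def, hE2def]
      exact h'
    have key : P1 * (2 * a2 / E2) ≤ P2 * (2 * a1 / E1) := by
      rw [conv1, conv2]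
      calc P1 * (2 * (x2 / E2) / t) = 2 * (P1 * (x2 / E2)) / t := by ring
        _ ≤ 2 * (P2 * (x1 / E1)) / t := by
            apply (div_le_div_iff_of_pos_right ht).mpr
            have := mul_le_mul hA hgm hg2pos.le hP2.le
            linarith only [this]
        _ = P2 * (2 * (x1 / E1) / t) := by ring
    linarith only [key, hBB]
  · -- a2 < a1 : use 1/2-Lipschitz bound
    have hgm : x2 / E2 ≤ x1 / E1 + (x1 - x2) / 2 := by
      have h' := h_monotone (Set.mem_Ioi.2 hx2) (Set.mem_Ioi.2 hx1)
        (by rw [hx1def, hx2def]; exact mul_le_mul_of_nonneg_right hcase.le ht.le)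
      simp only at h'
      rw [hE1def, hE2def]
      linarith
    have hxd : x1 - x2 = (a1 - a2) * t := by rw [hx1def, hx2def]; ring
    have key : P1 * (2 * a2 / E2) ≤ P2 * (2 * a1 / E1) + P1 * (a1 - a2) := by
      rw [conv1, conv2]
      calc P1 * (2 * (x2 / E2) / t)
          = 2 * (P1 * (x2 / E2)) / t := by ring
        _ ≤ 2 * (P2 * (x1 / E1) + P1 * ((x1 - x2) / 2)) / t := by
            apply (div_le_div_iff_of_pos_right ht).mpr
            have h1 := mul_le_mul_of_nonneg_left hgm hP1.le
            have h2 := mul_le_mul_of_nonneg_right hA hg1pos.le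
            have h3 : P1 * (x1 / E1 + (x1 - x2) / 2) = P1 * (x1 / E1) + P1 * ((x1 - x2) / 2) := by ring
            linarith only [h1, h2, h3]
        _ = P2 * (2 * (x1 / E1) / t) + P1 * ((a1 - a2) * t) / t := by
            rw [← hxd]; ring
        _ = P2 * (2 * (x1 / E1) / t) + P1 * (a1 - a2) := by
            field_simp
    have hfin : P1 * (c2 + a2) + P1 * (a1 - a2) ≤ P2 * (c1 + a1) := by
      have h1 := mul_le_mul_of_nonneg_right hA ha1.le
      have h2 : P1 * (c2 + a2) + P1 * (a1 - a2) = P1 * c2 + P1 * a1 := by ring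
      have h3 : P2 * (c1 + a1) = P2 * c1 + P2 * a1 := by ring
      linarith only [hDlem, h1, h2, h3]
    linarith only [key, hfin]

end WarmAux
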